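/- Let A be a commutative Noetherian ring, let k be a field of characteristic zero, and let l be a subfield of k. Suppose given a ring homomorphism f' : l → A and a ring homomorphism f₀ : k → A/nil(A) such that the restriction of f₀ to l equals the composition of f' with the quotient projection π : A → A/nil(A). Then there exists a ring homomorphism f : k → A such that π ∘ f = f₀ and the restriction of f to l equals f'. -/

import Mathlib

set_option synthInstance.maxHeartbeats 1000000
set_option maxHeartbeats 1000000

universe u
/-- In characteristic zero, any field extension is formally smooth. -/
theorem formallySmooth_of_charZero (l k : Type u) [Field l] [Field k] [CharZero l]
    [Algebra l k] : Algebra.FormallySmooth l k := by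
  obtain ⟨s, hb⟩ := exists_isTranscendenceBasis l k
  set K₀ := FractionRing (MvPolynomial s l) with hK₀
  have hg : Function.Injective (MvPolynomial.aeval ((↑) : s → k) : MvPolynomial s l →ₐ[l] k) :=
    hb.1
  let liftf : K₀ →ₐ[l] k := IsFractionRing.liftAlgHom hg
  have hs : (MvPolynomial.aeval ((↑) : s → k) : MvPolynomial s l →ₐ[l] k).range
      = Algebra.adjoin l s := by
    rw [← Algebra.adjoin_range_eq_range_aeval, Subtype.range_coe]
  have hrange : liftf.fieldRange = IntermediateField.adjoin l s :=
    IsFractionRing.liftAlgHom_fieldRange_eq_of_range_eq hg hs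
  letI : Algebra K₀ k := liftf.toRingHom.toAlgebra
  haveI : IsScalarTower l K₀ k :=
    IsScalarTower.of_algebraMap_eq' (liftf.comp_algebraMap).symm
  set E := IntermediateField.adjoin l s with hE
  haveI halgE : Algebra.IsAlgebraic E k := by
    have := hb.isAlgebraic_field
    rwa [Subtype.range_coe] at this
  have hmem : ∀ x : K₀, liftf x ∈ E := by
    intro x
    rw [← hrange]
    exact ⟨x, rfl⟩
  let F : K₀ →+* E :=
    { toFun := fun x => ⟨liftf x, hmem x⟩
      map_one' := by ext; simp
      map_mul' := fun x y => by ext; simp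
      map_zero' := by ext; simp
      map_add' := fun x y => by ext; simp }
  have hFsurj : Function.Surjective F := by
    rintro ⟨y, hy⟩
    rw [← hrange] at hy
    obtain ⟨x, hx⟩ := hy
    exact ⟨x, Subtype.ext hx⟩
  have hcomm : RingHom.comp (algebraMap E k) F
      = RingHom.comp (RingHom.id k) (algebraMap K₀ k) := by
    ext x; rfl
  haveI : Algebra.IsAlgebraic K₀ k :=
    Algebra.IsAlgebraic.of_ringHom_of_comp_eq F (RingHom.id k) hFsurj
      Function.injective_id hcomm
  haveI : Algebra.IsIntegral K₀ k := Algebra.IsAlgebraic.isIntegral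
  haveI : CharZero K₀ := charZero_of_injective_algebraMap (algebraMap l K₀).injective
  haveI : Algebra.FormallyEtale K₀ k := Algebra.FormallyEtale.of_isSeparable K₀ k
  haveI : Algebra.FormallySmooth (MvPolynomial s l) K₀ :=
    Algebra.FormallySmooth.of_isLocalization (nonZeroDivisors _)
  haveI : Algebra.FormallySmooth l K₀ :=
    Algebra.FormallySmooth.comp l (MvPolynomial s l) K₀
  exact Algebra.FormallySmooth.comp l K₀ k

/-- **Second assertion of Lemma 4.2** (characteristic-zero case).
Let `A` be a commutative Noetherian ring, `k` a field of characteristic zero and `l` a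
subfield of `k`.  Given a ring homomorphism `f' : l → A` and a ring homomorphism
`f₀ : k → A / nil(A)` whose restriction to `l` is the composition of `f'` with the
quotient projection `π`, there exists a ring homomorphism `f : k → A` with `π ∘ f = f₀`
whose restriction to `l` is `f'`. -/
theorem ringHom_lift_of_nilradical_compatible
    {A : Type*} [CommRing A] [IsNoetherianRing A]
    {k : Type*} [Field k] [CharZero k] (l : Subfield k)
    (f' : l →+* A) (f₀ : k →+* A ⧸ nilradical A)
    (hcompat : f₀.comp l.subtype = (Ideal.Quotient.mk (nilradical A)).comp f') :
    ∃ f : k →+* A,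
      (Ideal.Quotient.mk (nilradical A)).comp f = f₀ ∧ f.comp l.subtype = f' := by
  classical
  -- move everything into a common universe
  let k' := ULift.{u_1} k
  let L := ULift.{u_1} (↥l)
  let B := ULift.{u_2} A
  let ek : k' ≃+* k := ULift.ringEquiv
  let eL : L ≃+* ↥l := ULift.ringEquiv
  let e : B ≃+* A := ULift.ringEquiv
  haveI : CharZero k' := ek.toRingHom.charZero
  haveI : CharZero L := (l.subtype.comp eL.toRingHom).charZero
  letI : Algebra L k' :=
    ((ek.symm.toRingHom.comp l.subtype).comp eL.toRingHom).toAlgebra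
  haveI : Algebra.FormallySmooth L k' := formallySmooth_of_charZero L k'
  letI : Algebra L B := ((e.symm.toRingHom.comp f').comp eL.toRingHom).toAlgebra
  let I : Ideal B := (nilradical A).map e.symm.toRingHom
  have hnil : IsNilpotent I := by
    obtain ⟨n, hn⟩ := IsNoetherianRing.isNilpotent_nilradical A
    exact ⟨n, by rw [← Ideal.map_pow, hn]; exact Ideal.map_bot⟩
  have hIJ : nilradical A = I.map e.toRingHom := by
    rw [Ideal.map_map]
    simp
  let q : (B ⧸ I) ≃+* A ⧸ nilradical A := Ideal.quotientEquiv I (nilradical A) e hIJ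
  have hq : ∀ x : B, q (Ideal.Quotient.mk I x) = Ideal.Quotient.mk (nilradical A) (e x) :=
    fun x => Ideal.quotientEquiv_mk I (nilradical A) e hIJ x
  have hqs : ∀ y : A,
      q.symm (Ideal.Quotient.mk (nilradical A) y) = Ideal.Quotient.mk I (e.symm y) :=
    fun y => Ideal.quotientEquiv_symm_mk I (nilradical A) e hIJ y
  let g : k' →ₐ[L] B ⧸ I :=
    { toRingHom := q.symm.toRingHom.comp (f₀.comp ek.toRingHom)
      commutes' := by
        intro a
        show q.symm (f₀ (ek (ek.symm (l.subtype (eL a)))))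
          = Ideal.Quotient.mk I (e.symm (f' (eL a)))
        have h := RingHom.congr_fun hcompat (eL a)
        simp only [RingHom.comp_apply] at h
        rw [ek.apply_symm_apply, h]
        exact hqs _ }
  let F : k' →ₐ[L] B := Algebra.FormallySmooth.lift I hnil g
  have hF : ∀ x : k', Ideal.Quotient.mk I (F x) = g x :=
    fun x => Algebra.FormallySmooth.mk_lift I hnil g x
  refine ⟨e.toRingHom.comp (F.toRingHom.comp ek.symm.toRingHom), ?_, ?_⟩
  · ext x
    show Ideal.Quotient.mk (nilradical A) (e (F (ek.symm x))) = f₀ x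
    rw [← hq, hF]
    show q (q.symm (f₀ (ek (ek.symm x)))) = f₀ x
    rw [ek.apply_symm_apply, q.apply_symm_apply]
  · ext a
    show e (F (ek.symm (l.subtype a))) = f' a
    have h1 : ek.symm (l.subtype a) = algebraMap L k' (eL.symm a) := by
      show _ = ek.symm (l.subtype (eL (eL.symm a)))
      rw [eL.apply_symm_apply]
    rw [h1, F.commutes]
    show e (e.symm (f' (eL (eL.symm a)))) = f' a
    rw [eL.apply_symm_apply, e.apply_symm_apply]
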